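/- Let n ≥ 2 and k be integers with 1 ≤ k ≤ n−1, and let H(x,y) = ∑_{s=0}^{n+1} h_s x^{n+1−s} y^s ∈ ℂ[x,y] be a homogeneous polynomial of degree n+1 that is not divisible by the square of any non-zero linear form. Let E_{n,k} be the 2k×2k complex matrix built from the coefficients h_s as described in the context. Then det E_{n,k} = 0 if and only if there exists a family of complex numbers (c_{l,m}), indexed by pairs of integers (l,m) with 0 ≤ l,m ≤ n−1 and l+m = n+k−1, not all zero, such that ∑ c_{l,m} x^l y^m belongs to the ideal of ℂ[x,y] generated by ∂H/∂x and ∂H/∂y. -/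

import Mathlib

open MvPolynomial Finset

noncomputable section AuxiliaryLemmas

/-- coefficient functions for the partial derivatives -/
def aa (n : ℕ) (h : ℕ → ℂ) (s : ℕ) : ℂ := ((n + 1 - s : ℕ) : ℂ) * h s
def bb (h : ℕ → ℂ) (s : ℕ) : ℂ := ((s + 1 : ℕ) : ℂ) * h (s + 1)

lemma CXY (a : ℂ) (e i : ℕ) :
    C a * X (0 : Fin 2) ^ e * X (1 : Fin 2) ^ i
      = monomial (Finsupp.single 0 e + Finsupp.single 1 i) a := by
  rw [C_apply, X_pow_eq_monomial, X_pow_eq_monomial, monomial_mul, monomial_mul,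
    zero_add, mul_one, mul_one]

lemma single_add_single_inj {e1 i1 e2 i2 : ℕ} :
    (Finsupp.single (0 : Fin 2) e1 + Finsupp.single 1 i1
      = Finsupp.single 0 e2 + Finsupp.single 1 i2) ↔ (e1 = e2 ∧ i1 = i2) := by
  constructor
  · intro hh
    have h0 := DFunLike.congr_fun hh (0 : Fin 2)
    have h1 := DFunLike.congr_fun hh (1 : Fin 2)
    simp [Finsupp.single_apply] at h0 h1
    exact ⟨h0, h1⟩
  · rintro ⟨rfl, rfl⟩; rfl

lemma mu_rep (μ : Fin 2 →₀ ℕ) :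
    μ = Finsupp.single 0 (μ 0) + Finsupp.single 1 (μ 1) := by
  ext j
  fin_cases j <;> simp [Finsupp.single_apply]

lemma degree_two (μ : Fin 2 →₀ ℕ) : μ.degree = μ 0 + μ 1 := by
  show ∑ i ∈ μ.support, μ i = μ 0 + μ 1
  rw [Finset.sum_subset (Finset.subset_univ μ.support)
    (by intro x _ hx; exact Finsupp.notMem_support_iff.1 hx)]
  exact Fin.sum_univ_two μ

lemma coeff_sum_xy {ι : Type*} (I : Finset ι) (w : ι → ℂ) (f g : ι → ℕ) (e₁ e₂ : ℕ) :
    coeff (Finsupp.single 0 e₁ + Finsupp.single 1 e₂)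
        (∑ i ∈ I, C (w i) * X (0 : Fin 2) ^ f i * X (1 : Fin 2) ^ g i)
      = ∑ i ∈ I, if f i = e₁ ∧ g i = e₂ then w i else 0 := by
  rw [MvPolynomial.coeff_sum]
  refine Finset.sum_congr rfl fun i _ => ?_
  rw [CXY, coeff_monomial]
  rw [if_congr single_add_single_inj rfl rfl]

lemma isHomog_sum_xy {ι : Type*} (I : Finset ι) (w : ι → ℂ) (f g : ι → ℕ) (d : ℕ)
    (hfg : ∀ i ∈ I, f i + g i = d) :
    (∑ i ∈ I, C (w i) * X (0 : Fin 2) ^ f i * X (1 : Fin 2) ^ g i).IsHomogeneous d := by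
  refine IsHomogeneous.sum _ _ _ fun i hi => ?_
  rw [CXY]
  apply isHomogeneous_monomial
  rw [← hfg i hi]
  rw [degree_two]
  simp [Finsupp.single_apply]


lemma homog_rep (d : ℕ) (f : MvPolynomial (Fin 2) ℂ) (hf : f.IsHomogeneous d) :
    f = ∑ i ∈ range (d + 1),
        C (coeff (Finsupp.single 0 (d - i) + Finsupp.single 1 i) f)
          * X (0 : Fin 2) ^ (d - i) * X (1 : Fin 2) ^ i := by
  apply MvPolynomial.ext
  intro μ
  rw [show μ = Finsupp.single 0 (μ 0) + Finsupp.single 1 (μ 1) from mu_rep μ]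
  rw [coeff_sum_xy]
  by_cases hd : μ 0 + μ 1 = d
  · have hmem : μ 1 ∈ range (d + 1) := by simp; omega
    rw [Finset.sum_congr rfl (fun i hi => ?_), Finset.sum_ite_eq' (range (d+1)) (μ 1)
      (fun i => coeff (Finsupp.single 0 (d - i) + Finsupp.single 1 i) f), if_pos hmem]
    · rw [show d - μ 1 = μ 0 from by omega]
    · simp only [mem_range] at hi
      refine if_congr ⟨fun hc => hc.2, fun hc => ⟨by omega, hc⟩⟩ rfl rfl
  · rw [hf.coeff_eq_zero (by rw [degree_two]; simpa [Finsupp.single_apply] using hd)]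
    refine (Finset.sum_eq_zero fun i hi => ?_).symm
    simp only [mem_range] at hi
    rw [if_neg]
    rintro ⟨h1, h2⟩
    omega

lemma HC_self {d : ℕ} {f : MvPolynomial (Fin 2) ℂ} (hf : f.IsHomogeneous d) :
    homogeneousComponent d f = f := by
  rw [homogeneousComponent_of_mem ((mem_homogeneousSubmodule _ _).2 hf), if_pos rfl]

lemma HC_mul_homog (u g : MvPolynomial (Fin 2) ℂ) (n₀ j₀ : ℕ) (hg : g.IsHomogeneous n₀) :
    homogeneousComponent (j₀ + n₀) (u * g) = homogeneousComponent j₀ u * g := by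
  by_cases hj : j₀ ≤ u.totalDegree
  · conv_lhs => rw [← sum_homogeneousComponent u, Finset.sum_mul, map_sum]
    have hterm : ∀ j, homogeneousComponent (j₀ + n₀) (homogeneousComponent j u * g)
        = if j = j₀ then homogeneousComponent j u * g else 0 := by
      intro j
      rw [homogeneousComponent_of_mem ((mem_homogeneousSubmodule _ _).2
        ((homogeneousComponent_isHomogeneous j u).mul hg))]
      exact if_congr (by omega) rfl rfl
    rw [Finset.sum_congr rfl fun j _ => hterm j,
      Finset.sum_ite_eq' (range (u.totalDegree + 1)) j₀
        (fun j => homogeneousComponent j u * g),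
      if_pos (by simp; omega)]
  · push_neg at hj
    rw [homogeneousComponent_eq_zero _ _ hj, zero_mul,
      homogeneousComponent_eq_zero]
    calc (u * g).totalDegree ≤ u.totalDegree + g.totalDegree := totalDegree_mul u g
      _ ≤ u.totalDegree + n₀ := Nat.add_le_add_left hg.totalDegree_le _
      _ < j₀ + n₀ := by omega


lemma key_expand (n k' : ℕ) (hk' : 1 ≤ k') (p w : ℕ → ℂ) :
    (∑ i ∈ range k', C (p i) * X (0 : Fin 2) ^ (k' - 1 - i) * X (1 : Fin 2) ^ i) *
      (∑ s ∈ range (n + 1), C (w s) * X (0 : Fin 2) ^ (n - s) * X (1 : Fin 2) ^ s)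
    = ∑ m ∈ range (n + k'),
        C (∑ i ∈ range k', if i ≤ m ∧ m ≤ n + i then p i * w (m - i) else 0)
          * X (0 : Fin 2) ^ (n + k' - 1 - m) * X (1 : Fin 2) ^ m := by
  have common : ∀ i s : ℕ,
      (C (p i) * X (0 : Fin 2) ^ (k' - 1 - i) * X (1 : Fin 2) ^ i) *
        (C (w s) * X (0 : Fin 2) ^ (n - s) * X (1 : Fin 2) ^ s)
      = C (p i * w s) * X (0 : Fin 2) ^ ((k' - 1 - i) + (n - s)) * X (1 : Fin 2) ^ (i + s) := by
    intro i s
    rw [C_mul, pow_add, pow_add]; ring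
  rw [Finset.sum_mul_sum]
  -- RHS transform
  have hR : ∀ m : ℕ,
      C (∑ i ∈ range k', if i ≤ m ∧ m ≤ n + i then p i * w (m - i) else 0)
          * X (0 : Fin 2) ^ (n + k' - 1 - m) * X (1 : Fin 2) ^ m
      = ∑ i ∈ range k',
          (C (if i ≤ m ∧ m ≤ n + i then p i * w (m - i) else 0))
            * X (0 : Fin 2) ^ (n + k' - 1 - m) * X (1 : Fin 2) ^ m := fun m => by
    rw [map_sum, Finset.sum_mul, Finset.sum_mul]
  conv_rhs => rw [Finset.sum_congr rfl fun m _ => hR m, Finset.sum_comm]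
  refine Finset.sum_congr rfl fun i hi => ?_
  simp only [mem_range] at hi
  -- inner sums
  have hsub : (range (n + 1)).image (fun s => i + s) ⊆ range (n + k') := by
    intro m hm
    simp only [mem_image, mem_range] at hm ⊢
    obtain ⟨s, hs, rfl⟩ := hm
    omega
  rw [show ∑ m ∈ range (n + k'),
        (C (if i ≤ m ∧ m ≤ n + i then p i * w (m - i) else 0))
          * X (0 : Fin 2) ^ (n + k' - 1 - m) * X (1 : Fin 2) ^ m
      = ∑ m ∈ (range (n + 1)).image (fun s => i + s),
        (C (if i ≤ m ∧ m ≤ n + i then p i * w (m - i) else 0))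
          * X (0 : Fin 2) ^ (n + k' - 1 - m) * X (1 : Fin 2) ^ m from
    (Finset.sum_subset hsub fun m hm hnm => ?_).symm]
  · rw [Finset.sum_image (fun a _ b _ hab => by omega)]
    refine Finset.sum_congr rfl fun s hs => ?_
    simp only [mem_range] at hs
    rw [common, if_pos ⟨by omega, by omega⟩, Nat.add_sub_cancel_left,
      show (k' - 1 - i) + (n - s) = n + k' - 1 - (i + s) from by omega]
  · rw [if_neg, map_zero, zero_mul, zero_mul]
    rintro ⟨h1, h2⟩
    apply hnm
    simp only [mem_image, mem_range]
    exact ⟨m - i, by omega, by omega⟩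


lemma pderiv0_term (a : ℂ) (e s : ℕ) :
    pderiv (0 : Fin 2) (C a * X 0 ^ e * X 1 ^ s)
      = C (a * e) * X (0 : Fin 2) ^ (e - 1) * X (1 : Fin 2) ^ s := by
  have h1 : pderiv (0 : Fin 2) ((X (1 : Fin 2) : MvPolynomial (Fin 2) ℂ) ^ s) = 0 := by
    rw [pderiv_pow, pderiv_X_of_ne (by decide), mul_zero]
  rw [pderiv_mul, h1, mul_zero, add_zero, pderiv_mul, pderiv_C, zero_mul, zero_add,
    pderiv_pow, pderiv_X_self, mul_one]
  rw [show ((e : MvPolynomial (Fin 2) ℂ)) = C (e : ℂ) by simp, C_mul]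
  ring

lemma pderiv1_term (a : ℂ) (e s : ℕ) :
    pderiv (1 : Fin 2) (C a * X 0 ^ e * X 1 ^ s)
      = C (a * s) * X (0 : Fin 2) ^ e * X (1 : Fin 2) ^ (s - 1) := by
  have h1 : pderiv (1 : Fin 2) (C a * X (0 : Fin 2) ^ e) = 0 := by
    rw [pderiv_mul, pderiv_C, zero_mul, zero_add, pderiv_pow, pderiv_X_of_ne (by decide),
      mul_zero, mul_zero]
  rw [pderiv_mul, h1, zero_mul, zero_add, pderiv_pow, pderiv_X_self, mul_one]
  rw [show ((s : MvPolynomial (Fin 2) ℂ)) = C (s : ℂ) by simp, C_mul]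
  ring

lemma pderiv0_H (n : ℕ) (h : ℕ → ℂ) :
    pderiv (0 : Fin 2) (∑ s ∈ range (n + 2), C (h s) * X (0 : Fin 2) ^ (n + 1 - s) * X 1 ^ s)
      = ∑ s ∈ range (n + 1), C (aa n h s) * X (0 : Fin 2) ^ (n - s) * X (1 : Fin 2) ^ s := by
  rw [map_sum, Finset.sum_range_succ]
  rw [Finset.sum_congr rfl (fun s hs => pderiv0_term (h s) (n + 1 - s) s)]
  rw [pderiv0_term]
  rw [show (n + 1 - (n + 1) : ℕ) = 0 from by omega, Nat.cast_zero, mul_zero, map_zero,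
    zero_mul, zero_mul, add_zero]
  refine Finset.sum_congr rfl fun s hs => ?_
  simp only [mem_range] at hs
  rw [show (n + 1 - s - 1 : ℕ) = n - s from by omega]
  simp only [aa]
  rw [mul_comm (((n + 1 - s : ℕ) : ℂ)) (h s)]

lemma pderiv1_H (n : ℕ) (h : ℕ → ℂ) :
    pderiv (1 : Fin 2) (∑ s ∈ range (n + 2), C (h s) * X (0 : Fin 2) ^ (n + 1 - s) * X 1 ^ s)
      = ∑ s ∈ range (n + 1), C (bb h s) * X (0 : Fin 2) ^ (n - s) * X (1 : Fin 2) ^ s := by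
  rw [map_sum]
  rw [Finset.sum_congr rfl (fun s hs => pderiv1_term (h s) (n + 1 - s) s)]
  rw [Finset.sum_range_succ']
  rw [Nat.cast_zero, mul_zero, map_zero, zero_mul, zero_mul, add_zero]
  refine Finset.sum_congr rfl fun s hs => ?_
  rw [show (n + 1 - (s + 1) : ℕ) = n - s from by omega, show (s + 1 - 1 : ℕ) = s from by omega]
  simp only [bb]
  rw [mul_comm (((s + 1 : ℕ) : ℂ)) (h (s + 1))]


def φmap : MvPolynomial (Fin 2) ℂ →ₐ[ℂ] Polynomial ℂ :=
  aeval (fun i => if i = 0 then Polynomial.X else 1)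

lemma φmap_sum_xy {ι : Type*} (I : Finset ι) (w : ι → ℂ) (f g : ι → ℕ) :
    φmap (∑ i ∈ I, C (w i) * X (0 : Fin 2) ^ f i * X (1 : Fin 2) ^ g i)
      = ∑ i ∈ I, Polynomial.C (w i) * Polynomial.X ^ f i := by
  rw [map_sum]
  refine Finset.sum_congr rfl fun i _ => ?_
  rw [map_mul, map_mul, map_pow, map_pow]
  simp [φmap, aeval_X, Polynomial.algebraMap_eq]

lemma poly_coeff_sum (N : ℕ) (w : ℕ → ℂ) (e : ℕ → ℕ)
    (he : ∀ i ∈ Finset.range N, ∀ j ∈ Finset.range N, e i = e j → i = j)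
    (i₀ : ℕ) (hi₀ : i₀ ∈ Finset.range N) :
    (∑ i ∈ range N, Polynomial.C (w i) * Polynomial.X ^ e i).coeff (e i₀) = w i₀ := by
  rw [Polynomial.finset_sum_coeff]
  rw [Finset.sum_eq_single i₀ (fun j hj hne => ?_) (fun hni => absurd hi₀ hni)]
  · simp [Polynomial.coeff_C_mul, Polynomial.coeff_X_pow]
  · simp only [Polynomial.coeff_C_mul, Polynomial.coeff_X_pow]
    rw [if_neg (fun hc => hne (he j hj i₀ hi₀ hc.symm)), mul_zero]

lemma poly_eval_sum (N : ℕ) (w : ℕ → ℂ) (e : ℕ → ℕ) (α : ℂ) :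
    (∑ i ∈ range N, Polynomial.C (w i) * Polynomial.X ^ e i).eval α
      = ∑ i ∈ range N, w i * α ^ e i := by
  rw [Polynomial.eval_finset_sum]
  simp

lemma natDeg_g (n : ℕ) (w : ℕ → ℂ) (hw : w 0 ≠ 0) :
    (∑ s ∈ range (n + 1), Polynomial.C (w s) * Polynomial.X ^ (n - s)).natDegree = n := by
  apply le_antisymm
  · apply Polynomial.natDegree_sum_le_of_forall_le
    intro s _
    exact le_trans (Polynomial.natDegree_C_mul_le _ _) (by rw [Polynomial.natDegree_X_pow]; omega)
  · apply Polynomial.le_natDegree_of_ne_zero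
    have hc : (∑ s ∈ range (n + 1), Polynomial.C (w s) * Polynomial.X ^ (n - s)).coeff n
        = w 0 := by
      simpa using poly_coeff_sum (n + 1) w (fun s => n - s)
        (fun i hi j hj hij => by
          simp only [mem_range] at hi hj; omega) 0 (by simp)
    rw [hc]; exact hw
-- main contradiction lemma from a common root
lemma root_contra (n : ℕ) (hn : 2 ≤ n) (h : ℕ → ℂ) (H : MvPolynomial (Fin 2) ℂ)
    (hHdef : H = ∑ s ∈ Finset.range (n + 2),
      C (h s) * X (0 : Fin 2) ^ (n + 1 - s) * X (1 : Fin 2) ^ s)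
    (hgen : ∀ L : MvPolynomial (Fin 2) ℂ, L.IsHomogeneous 1 → L ≠ 0 → ¬ (L ^ 2 ∣ H))
    (α : ℂ)
    (hSa : ∑ s ∈ range (n + 1), aa n h s * α ^ (n - s) = 0)
    (hSb : ∑ s ∈ range (n + 1), bb h s * α ^ (n - s) = 0) : False := by
  -- Euler: the value of H at (α,1) vanishes
  have hE0 : ∑ s ∈ Finset.range (n + 2), h s * α ^ (n + 1 - s) = 0 := by
    have key : (n + 1 : ℂ) * ∑ s ∈ Finset.range (n + 2), h s * α ^ (n + 1 - s)
        = α * (∑ s ∈ range (n + 1), aa n h s * α ^ (n - s))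
          + ∑ s ∈ range (n + 1), bb h s * α ^ (n - s) := by
      have h1 : α * (∑ s ∈ range (n + 1), aa n h s * α ^ (n - s))
          = ∑ s ∈ range (n + 2), ((n + 1 - s : ℕ) : ℂ) * h s * α ^ (n + 1 - s) := by
        conv_rhs => rw [Finset.sum_range_succ]
        rw [show ((n + 1 - (n + 1) : ℕ) : ℂ) = 0 from by norm_num, zero_mul, zero_mul, add_zero,
          Finset.mul_sum]
        refine Finset.sum_congr rfl fun s hs => ?_
        simp only [mem_range] at hs
        rw [aa, show (n + 1 - s : ℕ) = (n - s) + 1 from by omega, pow_succ]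
        ring
      have h2 : (∑ s ∈ range (n + 1), bb h s * α ^ (n - s))
          = ∑ s ∈ range (n + 2), ((s : ℕ) : ℂ) * h s * α ^ (n + 1 - s) := by
        rw [Finset.sum_range_succ' (fun s => ((s : ℕ) : ℂ) * h s * α ^ (n + 1 - s)) (n + 1)]
        rw [Nat.cast_zero, zero_mul, zero_mul, add_zero]
        refine Finset.sum_congr rfl fun s hs => ?_
        rw [bb, show (n + 1 - (s + 1) : ℕ) = n - s from by omega]
      rw [h1, h2, ← Finset.sum_add_distrib, Finset.mul_sum]
      refine Finset.sum_congr rfl fun s hs => ?_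
      simp only [mem_range] at hs
      have hcast : ((n + 1 - s : ℕ) : ℂ) + ((s : ℕ) : ℂ) = (n : ℂ) + 1 := by
        have hh : (n + 1 - s) + s = n + 1 := by omega
        exact_mod_cast congrArg (Nat.cast : ℕ → ℂ) hh
      rw [← hcast]
      ring
    rw [hSa, hSb] at key
    simp only [mul_zero, zero_add] at key
    rcases mul_eq_zero.1 key with hc | hc
    · exact absurd hc (Nat.cast_add_one_ne_zero n)
    · exact hc
  -- pass to Polynomial (MvPolynomial (Fin 1) ℂ)
  set e2 := MvPolynomial.finSuccEquiv ℂ 1 with he2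
  set t : MvPolynomial (Fin 1) ℂ := MvPolynomial.X 0 with ht
  set r : MvPolynomial (Fin 1) ℂ := MvPolynomial.C α * t with hr
  have heC : ∀ c : ℂ, e2 (MvPolynomial.C c) = Polynomial.C (MvPolynomial.C c) := by
    intro c
    rw [← MvPolynomial.algebraMap_eq, AlgEquiv.commutes, Polynomial.algebraMap_apply,
      MvPolynomial.algebraMap_eq]
  have heX1 : e2 (MvPolynomial.X 1) = Polynomial.C t := by
    rw [show (1 : Fin 2) = Fin.succ 0 from rfl, MvPolynomial.finSuccEquiv_X_succ]
  have heH : e2 H = ∑ s ∈ range (n + 2),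
      Polynomial.C (MvPolynomial.C (h s) * t ^ s) * Polynomial.X ^ (n + 1 - s) := by
    rw [hHdef, map_sum]
    refine Finset.sum_congr rfl fun s hs => ?_
    rw [map_mul, map_mul, map_pow, map_pow, MvPolynomial.finSuccEquiv_X_zero, heX1, heC,
      ← Polynomial.C_pow, Polynomial.C_mul]
    ring
  have hevalH : Polynomial.eval r (e2 H) = 0 := by
    rw [heH, Polynomial.eval_finset_sum]
    have hterm : ∀ s ∈ range (n + 2),
        Polynomial.eval r (Polynomial.C (MvPolynomial.C (h s) * t ^ s)
            * Polynomial.X ^ (n + 1 - s))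
          = MvPolynomial.C (h s * α ^ (n + 1 - s)) * t ^ (n + 1) := by
      intro s hs
      simp only [mem_range] at hs
      rw [Polynomial.eval_mul, Polynomial.eval_C, Polynomial.eval_pow, Polynomial.eval_X, hr,
        mul_pow, ← MvPolynomial.C_pow, MvPolynomial.C_mul,
        show t ^ (n + 1) = t ^ s * t ^ (n + 1 - s) from by rw [← pow_add]; congr 1; omega]
      ring
    rw [Finset.sum_congr rfl hterm, ← Finset.sum_mul, ← map_sum, hE0, map_zero, zero_mul]
  obtain ⟨g, hg⟩ := (Polynomial.dvd_iff_isRoot).2 hevalH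
  have hder : Polynomial.eval r (Polynomial.derivative (e2 H)) = 0 := by
    rw [heH, map_sum, Polynomial.eval_finset_sum]
    have hterm : ∀ s ∈ range (n + 2),
        Polynomial.eval r (Polynomial.derivative
            (Polynomial.C (MvPolynomial.C (h s) * t ^ s) * Polynomial.X ^ (n + 1 - s)))
          = MvPolynomial.C (aa n h s * α ^ (n - s)) * t ^ n := by
      intro s hs
      simp only [mem_range] at hs
      rw [Polynomial.derivative_C_mul_X_pow]
      by_cases hsn : s ≤ n
      · rw [Polynomial.eval_mul, Polynomial.eval_C, Polynomial.eval_pow, Polynomial.eval_X,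
          show (n + 1 - s - 1 : ℕ) = n - s from by omega, hr, mul_pow, ← MvPolynomial.C_pow]
        rw [show ((n + 1 - s : ℕ) : MvPolynomial (Fin 1) ℂ)
            = MvPolynomial.C ((n + 1 - s : ℕ) : ℂ) from by simp]
        rw [aa, MvPolynomial.C_mul, MvPolynomial.C_mul,
          show t ^ n = t ^ s * t ^ (n - s) from by rw [← pow_add]; congr 1; omega]
        ring
      · have hs' : s = n + 1 := by omega
        subst hs'
        simp [aa]
    rw [Finset.sum_congr rfl hterm, ← Finset.sum_mul, ← map_sum]
    have hsum : ∑ s ∈ range (n + 2), aa n h s * α ^ (n - s) = 0 := by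
      rw [Finset.sum_range_succ, hSa, zero_add, aa]
      norm_num
    rw [hsum, map_zero, zero_mul]
  have hgroot : Polynomial.eval r g = 0 := by
    have hd : Polynomial.derivative (e2 H)
        = g + (Polynomial.X - Polynomial.C r) * Polynomial.derivative g := by
      rw [hg, Polynomial.derivative_mul, Polynomial.derivative_sub, Polynomial.derivative_X,
        Polynomial.derivative_C, sub_zero, one_mul]
    rw [hd] at hder
    simpa using hder
  obtain ⟨g₂, hg₂⟩ := (Polynomial.dvd_iff_isRoot).2 hgroot
  set L : MvPolynomial (Fin 2) ℂ :=
    MvPolynomial.X 0 - MvPolynomial.C α * MvPolynomial.X 1 with hLdef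
  have heL : e2 L = Polynomial.X - Polynomial.C r := by
    rw [hLdef, map_sub, map_mul, MvPolynomial.finSuccEquiv_X_zero, heX1, heC,
      ← Polynomial.C_mul, hr]
  have hLH : L ^ 2 ∣ H := by
    refine ⟨e2.symm g₂, ?_⟩
    apply e2.injective
    rw [map_mul, map_pow, heL, AlgEquiv.apply_symm_apply, hg, hg₂]
    ring
  refine hgen L ?_ ?_ hLH
  · have h1 : (MvPolynomial.X 0 : MvPolynomial (Fin 2) ℂ).IsHomogeneous 1 :=
      isHomogeneous_X _ _
    have h2 : (MvPolynomial.C α * MvPolynomial.X 1 : MvPolynomial (Fin 2) ℂ).IsHomogeneous 1 := by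
      simpa using (isHomogeneous_C (Fin 2) α).mul (isHomogeneous_X ℂ (1 : Fin 2))
    exact h1.sub h2
  · intro h0
    apply Polynomial.X_sub_C_ne_zero r
    rw [← heL, h0, map_zero]


lemma vanish_zero (n k : ℕ) (hn : 2 ≤ n) (hk1 : 1 ≤ k) (hk2 : k ≤ n - 1) (h : ℕ → ℂ)
    (H : MvPolynomial (Fin 2) ℂ)
    (hHdef : H = ∑ s ∈ Finset.range (n + 2),
      C (h s) * X (0 : Fin 2) ^ (n + 1 - s) * X (1 : Fin 2) ^ s)
    (hgen : ∀ L : MvPolynomial (Fin 2) ℂ, L.IsHomogeneous 1 → L ≠ 0 → ¬ (L ^ 2 ∣ H))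
    (p q : ℕ → ℂ)
    (hF : (∑ i ∈ range k, C (p i) * X (0 : Fin 2) ^ (k - 1 - i) * X (1 : Fin 2) ^ i) *
            (∑ s ∈ range (n + 1), C (aa n h s) * X (0 : Fin 2) ^ (n - s) * X (1 : Fin 2) ^ s)
        + (∑ i ∈ range k, C (q i) * X (0 : Fin 2) ^ (k - 1 - i) * X (1 : Fin 2) ^ i) *
            (∑ s ∈ range (n + 1), C (bb h s) * X (0 : Fin 2) ^ (n - s) * X (1 : Fin 2) ^ s)
        = 0) :
    ∀ i < k, p i = 0 ∧ q i = 0 := by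
  classical
  set ga := ∑ s ∈ range (n + 1), Polynomial.C (aa n h s) * Polynomial.X ^ (n - s) with hga
  set gb := ∑ s ∈ range (n + 1), Polynomial.C (bb h s) * Polynomial.X ^ (n - s) with hgb
  set fp := ∑ i ∈ range k, Polynomial.C (p i) * Polynomial.X ^ (k - 1 - i) with hfp
  set fq := ∑ i ∈ range k, Polynomial.C (q i) * Polynomial.X ^ (k - 1 - i) with hfq
  have hrel : fp * ga + fq * gb = 0 := by
    have hmap := congrArg φmap hF
    rw [map_add, map_mul, map_mul, map_zero, φmap_sum_xy, φmap_sum_xy, φmap_sum_xy,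
      φmap_sum_xy] at hmap
    exact hmap
  have hinjk : ∀ i ∈ Finset.range k, ∀ j ∈ Finset.range k, k - 1 - i = k - 1 - j → i = j := by
    intro i hi j hj hij
    simp only [mem_range] at hi hj
    omega
  have hinjn : ∀ i ∈ Finset.range (n + 1), ∀ j ∈ Finset.range (n + 1), n - i = n - j → i = j := by
    intro i hi j hj hij
    simp only [mem_range] at hi hj
    omega
  have hpz : fp = 0 → ∀ i < k, p i = 0 := by
    intro h0 i hi
    have hc := poly_coeff_sum k p (fun i => k - 1 - i) hinjk i (mem_range.2 hi)
    rw [← hfp, h0, Polynomial.coeff_zero] at hc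
    exact hc.symm
  have hqz : fq = 0 → ∀ i < k, q i = 0 := by
    intro h0 i hi
    have hc := poly_coeff_sum k q (fun i => k - 1 - i) hinjk i (mem_range.2 hi)
    rw [← hfq, h0, Polynomial.coeff_zero] at hc
    exact hc.symm
  have hgane : ga ≠ 0 := by
    intro h0
    have hhz : ∀ s, s ≤ n → h s = 0 := by
      intro s hsn
      have hc := poly_coeff_sum (n + 1) (aa n h) (fun s => n - s) hinjn s
        (mem_range.2 (by omega))
      rw [← hga, h0, Polynomial.coeff_zero] at hc
      rw [aa] at hc
      rcases mul_eq_zero.1 hc.symm with hc' | hc'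
      · exact absurd hc' (Nat.cast_ne_zero.2 (by omega))
      · exact hc'
    apply hgen (X 1) (isHomogeneous_X _ _) (MvPolynomial.X_ne_zero _)
    rw [hHdef]
    apply Finset.dvd_sum
    intro s hs
    simp only [mem_range] at hs
    by_cases hsn : s ≤ n
    · rw [hhz s hsn]; simp
    · have hseq : s = n + 1 := by omega
      subst hseq
      exact Dvd.dvd.mul_left (pow_dvd_pow _ (by omega)) _
  have hgbne : gb ≠ 0 := by
    intro h0
    have hhz : ∀ s, 1 ≤ s → s ≤ n + 1 → h s = 0 := by
      intro s hs1 hsn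
      have hc := poly_coeff_sum (n + 1) (bb h) (fun s => n - s) hinjn (s - 1)
        (mem_range.2 (by omega))
      rw [← hgb, h0, Polynomial.coeff_zero] at hc
      rw [bb] at hc
      rcases mul_eq_zero.1 hc.symm with hc' | hc'
      · exact absurd hc' (Nat.cast_ne_zero.2 (by omega))
      · rw [show s - 1 + 1 = s from by omega] at hc'
        exact hc'
    apply hgen (X 0) (isHomogeneous_X _ _) (MvPolynomial.X_ne_zero _)
    rw [hHdef]
    apply Finset.dvd_sum
    intro s hs
    simp only [mem_range] at hs
    by_cases hs1 : 1 ≤ s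
    · rw [hhz s hs1 (by omega)]; simp
    · have hseq : s = 0 := by omega
      subst hseq
      exact Dvd.dvd.mul_right (Dvd.dvd.mul_left (pow_dvd_pow _ (by omega)) _) _
  by_cases hfp0 : fp = 0
  · have hqgb : fq * gb = 0 := by
      rw [hfp0, zero_mul, zero_add] at hrel
      exact hrel
    have hfq0 : fq = 0 := by
      rcases mul_eq_zero.1 hqgb with h' | h'
      · exact h'
      · exact absurd h' hgbne
    exact fun i hi => ⟨hpz hfp0 i hi, hqz hfq0 i hi⟩
  · exfalso
    have hfq0 : fq ≠ 0 := by
      intro h0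
      rw [h0, zero_mul, add_zero] at hrel
      rcases mul_eq_zero.1 hrel with h' | h'
      exacts [hfp0 h', hgane h']
    have hfpdeg : fp.natDegree ≤ k - 1 := by
      rw [hfp]
      refine Polynomial.natDegree_sum_le_of_forall_le _ _ fun i hi => ?_
      exact le_trans (Polynomial.natDegree_C_mul_le _ _)
        (by rw [Polynomial.natDegree_X_pow]; omega)
    have hfqdeg : fq.natDegree ≤ k - 1 := by
      rw [hfq]
      refine Polynomial.natDegree_sum_le_of_forall_le _ _ fun i hi => ?_
      exact le_trans (Polynomial.natDegree_C_mul_le _ _)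
        (by rw [Polynomial.natDegree_X_pow]; omega)
    by_cases h01 : h 0 = 0 ∧ h 1 = 0
    · apply hgen (X 1) (isHomogeneous_X _ _) (MvPolynomial.X_ne_zero _)
      rw [hHdef]
      apply Finset.dvd_sum
      intro s hs
      rcases Nat.lt_or_ge s 2 with hs2 | hs2
      · interval_cases s
        · rw [h01.1]; simp
        · rw [h01.2]; simp
      · exact Dvd.dvd.mul_left (pow_dvd_pow _ hs2) _
    · set d := EuclideanDomain.gcd ga gb with hd
      by_cases hdeg : d.degree = 0
      · have hu : IsUnit d := Polynomial.isUnit_iff_degree_eq_zero.2 hdeg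
        obtain ⟨v, hv⟩ := hu.exists_right_inv
        have hbez := EuclideanDomain.gcd_eq_gcd_ab ga gb
        have hcop : IsCoprime ga gb := by
          refine ⟨EuclideanDomain.gcdA ga gb * v, EuclideanDomain.gcdB ga gb * v, ?_⟩
          have h1 : (ga * EuclideanDomain.gcdA ga gb + gb * EuclideanDomain.gcdB ga gb) * v
              = 1 := by rw [← hbez, ← hd]; exact hv
          linear_combination h1
        rcases not_and_or.1 h01 with h0ne | h1ne
        · have hdga : ga.natDegree = n := by
            rw [hga]
            refine natDeg_g n (aa n h) ?_
            rw [aa]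
            exact mul_ne_zero (Nat.cast_ne_zero.2 (by omega)) h0ne
          have hdvd : ga ∣ fq * gb := ⟨-fp, by linear_combination hrel⟩
          have hle := Polynomial.natDegree_le_of_dvd (hcop.dvd_of_dvd_mul_right hdvd) hfq0
          omega
        · have hdgb : gb.natDegree = n := by
            rw [hgb]
            refine natDeg_g n (bb h) ?_
            rw [bb]
            simpa using h1ne
          have hdvd : gb ∣ fp * ga := ⟨-fq, by linear_combination hrel⟩
          have hle := Polynomial.natDegree_le_of_dvd (hcop.symm.dvd_of_dvd_mul_right hdvd) hfp0
          omega
      · obtain ⟨α, hα⟩ := IsAlgClosed.exists_root d hdeg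
        have hga0 : ga.eval α = 0 := by
          obtain ⟨c, hc⟩ := EuclideanDomain.gcd_dvd_left ga gb
          rw [← hd] at hc
          rw [hc, Polynomial.eval_mul, show d.eval α = 0 from hα, zero_mul]
        have hgb0 : gb.eval α = 0 := by
          obtain ⟨c, hc⟩ := EuclideanDomain.gcd_dvd_right ga gb
          rw [← hd] at hc
          rw [hc, Polynomial.eval_mul, show d.eval α = 0 from hα, zero_mul]
        refine root_contra n hn h H hHdef hgen α ?_ ?_
        · rw [← poly_eval_sum (n + 1) (aa n h) (fun s => n - s) α, ← hga, hga0]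
        · rw [← poly_eval_sum (n + 1) (bb h) (fun s => n - s) α, ← hgb, hgb0]

/-- coefficient of the combination in degree `n+k-1` -/
def ccf (n k : ℕ) (h : ℕ → ℂ) (p q : ℕ → ℂ) (m : ℕ) : ℂ :=
  ∑ i ∈ Finset.range k,
    if i ≤ m ∧ m ≤ n + i then p i * aa n h (m - i) + q i * bb h (m - i) else 0

lemma F_expand (n k : ℕ) (hk1 : 1 ≤ k) (h p q : ℕ → ℂ) :
    (∑ i ∈ range k, C (p i) * X (0 : Fin 2) ^ (k - 1 - i) * X (1 : Fin 2) ^ i) *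
      (∑ s ∈ range (n + 1), C (aa n h s) * X (0 : Fin 2) ^ (n - s) * X (1 : Fin 2) ^ s)
    + (∑ i ∈ range k, C (q i) * X (0 : Fin 2) ^ (k - 1 - i) * X (1 : Fin 2) ^ i) *
      (∑ s ∈ range (n + 1), C (bb h s) * X (0 : Fin 2) ^ (n - s) * X (1 : Fin 2) ^ s)
    = ∑ m ∈ range (n + k),
        C (ccf n k h p q m) * X (0 : Fin 2) ^ (n + k - 1 - m) * X (1 : Fin 2) ^ m := by
  rw [key_expand n k hk1 p (aa n h), key_expand n k hk1 q (bb h), ← Finset.sum_add_distrib]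
  refine Finset.sum_congr rfl fun m hm => ?_
  have hcc : ccf n k h p q m
      = (∑ i ∈ range k, if i ≤ m ∧ m ≤ n + i then p i * aa n h (m - i) else 0)
      + (∑ i ∈ range k, if i ≤ m ∧ m ≤ n + i then q i * bb h (m - i) else 0) := by
    simp only [ccf, ← Finset.sum_add_distrib]
    refine Finset.sum_congr rfl fun i _ => ?_
    split_ifs <;> simp
  rw [hcc, C_add]
  ring

lemma bridge_inl (n k : ℕ) (hn : 2 ≤ n) (hk2 : k ≤ n - 1) (h : ℕ → ℂ)
    (A C' : Matrix (Fin k) (Fin k) ℂ)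
    (hA : ∀ i j : Fin k, A i j =
      if (i : ℕ) ≤ (j : ℕ) then ((n + 1 - ((j : ℕ) - (i : ℕ)) : ℕ) : ℂ) * h ((j : ℕ) - (i : ℕ))
      else 0)
    (hC : ∀ i j : Fin k, C' i j =
      if (i : ℕ) ≤ (j : ℕ) then (((j : ℕ) - (i : ℕ) + 1 : ℕ) : ℂ) * h ((j : ℕ) - (i : ℕ) + 1)
      else 0)
    (p q : ℕ → ℂ) (j : Fin k) :
    (∑ i : Fin k, A i j * p ↑i) + (∑ i : Fin k, C' i j * q ↑i) = ccf n k h p q ↑j := by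
  have hj := j.isLt
  rw [ccf, Finset.sum_range fun i =>
    if i ≤ (j : ℕ) ∧ (j : ℕ) ≤ n + i then p i * aa n h ((j : ℕ) - i) + q i * bb h ((j : ℕ) - i)
    else 0, ← Finset.sum_add_distrib]
  refine Finset.sum_congr rfl fun i _ => ?_
  have hi := i.isLt
  rw [hA i j, hC i j]
  rw [show (if ((i : ℕ) ≤ (j : ℕ) ∧ (j : ℕ) ≤ n + (i : ℕ))
      then p ↑i * aa n h ((j : ℕ) - ↑i) + q ↑i * bb h ((j : ℕ) - ↑i) else 0)
    = (if (i : ℕ) ≤ (j : ℕ)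
      then p ↑i * aa n h ((j : ℕ) - ↑i) + q ↑i * bb h ((j : ℕ) - ↑i) else 0)
    from if_congr (and_iff_left (by omega)) rfl rfl]
  split_ifs with hij
  · simp only [aa, bb]
    ring
  · ring

lemma bridge_inr (n k : ℕ) (hn : 2 ≤ n) (hk2 : k ≤ n - 1) (h : ℕ → ℂ)
    (B D : Matrix (Fin k) (Fin k) ℂ)
    (hB : ∀ i j : Fin k, B i j =
      if (j : ℕ) ≤ (i : ℕ) then (((i : ℕ) - (j : ℕ) + 1 : ℕ) : ℂ) * h (n - ((i : ℕ) - (j : ℕ)))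
      else 0)
    (hD : ∀ i j : Fin k, D i j =
      if (j : ℕ) ≤ (i : ℕ) then ((n + 1 - ((i : ℕ) - (j : ℕ)) : ℕ) : ℂ) *
        h (n + 1 - ((i : ℕ) - (j : ℕ)))
      else 0)
    (p q : ℕ → ℂ) (j : Fin k) :
    (∑ i : Fin k, B i j * p ↑i) + (∑ i : Fin k, D i j * q ↑i) = ccf n k h p q (n + ↑j) := by
  have hj := j.isLt
  rw [ccf, Finset.sum_range fun i =>
    if i ≤ n + (j : ℕ) ∧ n + (j : ℕ) ≤ n + i
    then p i * aa n h (n + (j : ℕ) - i) + q i * bb h (n + (j : ℕ) - i)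
    else 0, ← Finset.sum_add_distrib]
  refine Finset.sum_congr rfl fun i _ => ?_
  have hi := i.isLt
  rw [hB i j, hD i j]
  rw [show (if ((i : ℕ) ≤ n + (j : ℕ) ∧ n + (j : ℕ) ≤ n + (i : ℕ))
      then p ↑i * aa n h (n + (j : ℕ) - ↑i) + q ↑i * bb h (n + (j : ℕ) - ↑i) else 0)
    = (if (j : ℕ) ≤ (i : ℕ)
      then p ↑i * aa n h (n + (j : ℕ) - ↑i) + q ↑i * bb h (n + (j : ℕ) - ↑i) else 0)
    from if_congr (by constructor <;> intro hc <;> [omega; exact ⟨by omega, by omega⟩]) rfl rfl]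
  split_ifs with hij
  · have e1 : n + (j : ℕ) - (i : ℕ) = n - ((i : ℕ) - (j : ℕ)) := by omega
    have e2 : n + 1 - (n - ((i : ℕ) - (j : ℕ))) = (i : ℕ) - (j : ℕ) + 1 := by omega
    have e3 : n - ((i : ℕ) - (j : ℕ)) + 1 = n + 1 - ((i : ℕ) - (j : ℕ)) := by omega
    rw [e1]
    simp only [aa, bb]
    rw [e2, e3]
    ring
  · ring

end AuxiliaryLemmas

/-- Remark 4 of the paper: for `H(x,y) = ∑_{s=0}^{n+1} h_s x^{n+1−s} y^s` generic and
`1 ≤ k ≤ n−1`, the `2k×2k` matrix `E_{n,k}` of formula (6) is degenerate iff some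
non-trivial linear combination `∑ c_{l,m} x^l y^m` over pairs `(l,m)` with
`0 ≤ l,m ≤ n−1`, `l+m = n+k−1`, belongs to the gradient ideal of `H`. -/
theorem det_E_eq_zero_iff (n k : ℕ) (hn : 2 ≤ n) (hk1 : 1 ≤ k) (hk2 : k ≤ n - 1)
    (h : ℕ → ℂ)
    (H : MvPolynomial (Fin 2) ℂ)
    (hHdef : H = ∑ s ∈ Finset.range (n + 2),
      C (h s) * X (0 : Fin 2) ^ (n + 1 - s) * X (1 : Fin 2) ^ s)
    (hgen : ∀ L : MvPolynomial (Fin 2) ℂ, L.IsHomogeneous 1 → L ≠ 0 → ¬ (L ^ 2 ∣ H))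
    (A B C' D : Matrix (Fin k) (Fin k) ℂ)
    (hA : ∀ i j : Fin k, A i j =
      if (i : ℕ) ≤ (j : ℕ) then ((n + 1 - ((j : ℕ) - (i : ℕ)) : ℕ) : ℂ) * h ((j : ℕ) - (i : ℕ))
      else 0)
    (hB : ∀ i j : Fin k, B i j =
      if (j : ℕ) ≤ (i : ℕ) then (((i : ℕ) - (j : ℕ) + 1 : ℕ) : ℂ) * h (n - ((i : ℕ) - (j : ℕ)))
      else 0)
    (hC : ∀ i j : Fin k, C' i j =
      if (i : ℕ) ≤ (j : ℕ) then (((j : ℕ) - (i : ℕ) + 1 : ℕ) : ℂ) * h ((j : ℕ) - (i : ℕ) + 1)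
      else 0)
    (hD : ∀ i j : Fin k, D i j =
      if (j : ℕ) ≤ (i : ℕ) then ((n + 1 - ((i : ℕ) - (j : ℕ)) : ℕ) : ℂ) *
        h (n + 1 - ((i : ℕ) - (j : ℕ)))
      else 0) :
    (Matrix.fromBlocks A B C' D).det = 0 ↔
      ∃ c : ℕ × ℕ → ℂ,
        (∃ p ∈ ((Finset.range n) ×ˢ (Finset.range n)).filter
            (fun p : ℕ × ℕ => p.1 + p.2 = n + k - 1), c p ≠ 0) ∧
        (∑ p ∈ ((Finset.range n) ×ˢ (Finset.range n)).filter
            (fun p : ℕ × ℕ => p.1 + p.2 = n + k - 1),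
          C (c p) * X (0 : Fin 2) ^ p.1 * X (1 : Fin 2) ^ p.2) ∈
          Ideal.span {pderiv (0 : Fin 2) H, pderiv (1 : Fin 2) H} := by
  classical
  have hHx : pderiv (0 : Fin 2) H
      = ∑ s ∈ range (n + 1), C (aa n h s) * X (0 : Fin 2) ^ (n - s) * X (1 : Fin 2) ^ s := by
    rw [hHdef]; exact pderiv0_H n h
  have hHy : pderiv (1 : Fin 2) H
      = ∑ s ∈ range (n + 1), C (bb h s) * X (0 : Fin 2) ^ (n - s) * X (1 : Fin 2) ^ s := by
    rw [hHdef]; exact pderiv1_H n h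
  set S := ((Finset.range n) ×ˢ (Finset.range n)).filter
      (fun p : ℕ × ℕ => p.1 + p.2 = n + k - 1) with hS
  have hSmem : ∀ pr : ℕ × ℕ, pr ∈ S ↔ (pr.1 < n ∧ pr.2 < n ∧ pr.1 + pr.2 = n + k - 1) := by
    intro pr
    simp [hS, Finset.mem_filter, Finset.mem_product, and_assoc]
  -- mulVec bridges
  have hmulinl : ∀ (p q : ℕ → ℂ) (j : Fin k),
      (Matrix.fromBlocks A B C' D).transpose.mulVec
        (Sum.elim (fun i : Fin k => p ↑i) (fun i : Fin k => q ↑i)) (Sum.inl j)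
      = ccf n k h p q ↑j := by
    intro p q j
    rw [← bridge_inl n k hn hk2 h A C' hA hC p q j]
    simp [Matrix.mulVec, dotProduct, Fintype.sum_sum_type, Matrix.transpose_apply]
  have hmulinr : ∀ (p q : ℕ → ℂ) (j : Fin k),
      (Matrix.fromBlocks A B C' D).transpose.mulVec
        (Sum.elim (fun i : Fin k => p ↑i) (fun i : Fin k => q ↑i)) (Sum.inr j)
      = ccf n k h p q (n + ↑j) := by
    intro p q j
    rw [← bridge_inr n k hn hk2 h B D hB hD p q j]
    simp [Matrix.mulVec, dotProduct, Fintype.sum_sum_type, Matrix.transpose_apply]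
  constructor
  · -- forward
    intro hdet
    rw [← Matrix.det_transpose] at hdet
    obtain ⟨v, hv0, hvE⟩ := Matrix.exists_mulVec_eq_zero_iff.2 hdet
    set p : ℕ → ℂ := fun i => if hi : i < k then v (Sum.inl ⟨i, hi⟩) else 0 with hp
    set q : ℕ → ℂ := fun i => if hi : i < k then v (Sum.inr ⟨i, hi⟩) else 0 with hq
    have hvelim : v = Sum.elim (fun i : Fin k => p ↑i) (fun i : Fin k => q ↑i) := by
      funext x
      cases x with
      | inl i => simp [hp, i.isLt]
      | inr i => simp [hq, i.isLt]
    rw [hvelim] at hvE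
    have hlow : ∀ j : Fin k, ccf n k h p q ↑j = 0 := fun j => by
      rw [← hmulinl p q j, hvE]; rfl
    have hhigh : ∀ j : Fin k, ccf n k h p q (n + ↑j) = 0 := fun j => by
      rw [← hmulinr p q j, hvE]; rfl
    have hccz : ∀ m : ℕ, (m < k ∨ (n ≤ m ∧ m < n + k)) → ccf n k h p q m = 0 := by
      rintro m (hm | ⟨hm1, hm2⟩)
      · exact hlow ⟨m, hm⟩
      · have := hhigh ⟨m - n, by omega⟩
        rwa [show n + ((⟨m - n, by omega⟩ : Fin k) : ℕ) = m from by simp; omega] at this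
    refine ⟨fun pr => ccf n k h p q pr.2, ?_, ?_⟩
    · by_contra hno
      push_neg at hno
      have hallz : ∀ m ∈ range (n + k), ccf n k h p q m = 0 := by
        intro m hm
        simp only [mem_range] at hm
        by_cases hmk : m < k
        · exact hccz m (Or.inl hmk)
        · by_cases hmn : m < n
          · have hpr : ((n + k - 1 - m, m) : ℕ × ℕ) ∈ S :=
              (hSmem _).2 ⟨by omega, hmn, by omega⟩
            exact hno _ hpr
          · exact hccz m (Or.inr ⟨by omega, hm⟩)
      have hF0 : (∑ i ∈ range k, C (p i) * X (0 : Fin 2) ^ (k - 1 - i) * X (1 : Fin 2) ^ i) *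
            (∑ s ∈ range (n + 1), C (aa n h s) * X (0 : Fin 2) ^ (n - s) * X (1 : Fin 2) ^ s)
          + (∑ i ∈ range k, C (q i) * X (0 : Fin 2) ^ (k - 1 - i) * X (1 : Fin 2) ^ i) *
            (∑ s ∈ range (n + 1), C (bb h s) * X (0 : Fin 2) ^ (n - s) * X (1 : Fin 2) ^ s)
          = 0 := by
        rw [F_expand n k hk1 h p q]
        exact Finset.sum_eq_zero fun m hm => by rw [hallz m hm]; simp
      have hz := vanish_zero n k hn hk1 hk2 h H hHdef hgen p q hF0
      apply hv0
      rw [hvelim]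
      funext x
      cases x with
      | inl i => exact (hz ↑i i.isLt).1
      | inr i => exact (hz ↑i i.isLt).2
    · rw [Ideal.mem_span_pair]
      refine ⟨∑ i ∈ range k, C (p i) * X (0 : Fin 2) ^ (k - 1 - i) * X (1 : Fin 2) ^ i,
        ∑ i ∈ range k, C (q i) * X (0 : Fin 2) ^ (k - 1 - i) * X (1 : Fin 2) ^ i, ?_⟩
      rw [hHx, hHy, F_expand n k hk1 h p q]
      have hSimg : S = (Finset.Ico k n).image (fun m => (n + k - 1 - m, m)) := by
        ext pr
        simp only [hSmem, Finset.mem_image, Finset.mem_Ico]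
        constructor
        · rintro ⟨h1, h2, h3⟩
          exact ⟨pr.2, ⟨by omega, h2⟩, by
            rw [show n + k - 1 - pr.2 = pr.1 from by omega]⟩
        · rintro ⟨m, ⟨hm1, hm2⟩, rfl⟩
          exact ⟨by omega, hm2, by omega⟩
      rw [hSimg, Finset.sum_image
        (fun a _ b _ hab => by simpa using congrArg Prod.snd hab)]
      symm
      apply Finset.sum_subset
      · intro m hm
        simp only [Finset.mem_Ico] at hm
        simp only [mem_range]
        omega
      · intro m hm hnm
        simp only [mem_range] at hm
        simp only [Finset.mem_Ico, not_and, not_le] at hnm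
        have : ccf n k h p q m = 0 := by
          by_cases hmk : m < k
          · exact hccz m (Or.inl hmk)
          · exact hccz m (Or.inr ⟨by omega, hm⟩)
        simp [this]
  · -- backward
    rintro ⟨c, ⟨p₀, hp₀S, hc0⟩, hmem⟩
    set T := ∑ pr ∈ S, C (c pr) * X (0 : Fin 2) ^ pr.1 * X (1 : Fin 2) ^ pr.2 with hT
    have hThom : T.IsHomogeneous (n + k - 1) :=
      isHomog_sum_xy S c _ _ _ (fun pr hpr => ((hSmem pr).1 hpr).2.2)
    obtain ⟨u, w, huw⟩ := Ideal.mem_span_pair.1 hmem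
    rw [hHx, hHy] at huw
    set pfun : ℕ → ℂ := fun i =>
      coeff (Finsupp.single 0 (k - 1 - i) + Finsupp.single 1 i)
        (homogeneousComponent (k - 1) u) with hpfun
    set qfun : ℕ → ℂ := fun i =>
      coeff (Finsupp.single 0 (k - 1 - i) + Finsupp.single 1 i)
        (homogeneousComponent (k - 1) w) with hqfun
    have hPrep : homogeneousComponent (k - 1) u
        = ∑ i ∈ range k, C (pfun i) * X (0 : Fin 2) ^ (k - 1 - i) * X (1 : Fin 2) ^ i := by
      have := homog_rep (k - 1) (homogeneousComponent (k - 1) u)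
        (homogeneousComponent_isHomogeneous _ _)
      rwa [show (k - 1) + 1 = k from by omega] at this
    have hQrep : homogeneousComponent (k - 1) w
        = ∑ i ∈ range k, C (qfun i) * X (0 : Fin 2) ^ (k - 1 - i) * X (1 : Fin 2) ^ i := by
      have := homog_rep (k - 1) (homogeneousComponent (k - 1) w)
        (homogeneousComponent_isHomogeneous _ _)
      rwa [show (k - 1) + 1 = k from by omega] at this
    have hGahom : (∑ s ∈ range (n + 1),
        C (aa n h s) * X (0 : Fin 2) ^ (n - s) * X (1 : Fin 2) ^ s).IsHomogeneous n :=
      isHomog_sum_xy _ _ _ _ n (fun s hs => by simp only [mem_range] at hs; omega)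
    have hGbhom : (∑ s ∈ range (n + 1),
        C (bb h s) * X (0 : Fin 2) ^ (n - s) * X (1 : Fin 2) ^ s).IsHomogeneous n :=
      isHomog_sum_xy _ _ _ _ n (fun s hs => by simp only [mem_range] at hs; omega)
    have hTexp : T = ∑ m ∈ range (n + k),
        C (ccf n k h pfun qfun m) * X (0 : Fin 2) ^ (n + k - 1 - m) * X (1 : Fin 2) ^ m := by
      have h1 : homogeneousComponent (n + k - 1)
          (u * ∑ s ∈ range (n + 1), C (aa n h s) * X (0 : Fin 2) ^ (n - s) * X (1 : Fin 2) ^ s)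
          = homogeneousComponent (k - 1) u
            * ∑ s ∈ range (n + 1), C (aa n h s) * X (0 : Fin 2) ^ (n - s) * X (1 : Fin 2) ^ s := by
        rw [show n + k - 1 = (k - 1) + n from by omega]
        exact HC_mul_homog u _ n (k - 1) hGahom
      have h2 : homogeneousComponent (n + k - 1)
          (w * ∑ s ∈ range (n + 1), C (bb h s) * X (0 : Fin 2) ^ (n - s) * X (1 : Fin 2) ^ s)
          = homogeneousComponent (k - 1) w
            * ∑ s ∈ range (n + 1), C (bb h s) * X (0 : Fin 2) ^ (n - s) * X (1 : Fin 2) ^ s := by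
        rw [show n + k - 1 = (k - 1) + n from by omega]
        exact HC_mul_homog w _ n (k - 1) hGbhom
      calc T = homogeneousComponent (n + k - 1) T := (HC_self hThom).symm
        _ = homogeneousComponent (k - 1) u
              * (∑ s ∈ range (n + 1),
                  C (aa n h s) * X (0 : Fin 2) ^ (n - s) * X (1 : Fin 2) ^ s)
            + homogeneousComponent (k - 1) w
              * (∑ s ∈ range (n + 1),
                  C (bb h s) * X (0 : Fin 2) ^ (n - s) * X (1 : Fin 2) ^ s) := by
            rw [← huw, map_add, h1, h2]
        _ = _ := by rw [hPrep, hQrep]; exact F_expand n k hk1 h pfun qfun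
    have hccz : ∀ m : ℕ, m < n + k → (m < k ∨ n ≤ m) → ccf n k h pfun qfun m = 0 := by
      intro m hmnk hm
      have hc1 : coeff (Finsupp.single 0 (n + k - 1 - m) + Finsupp.single 1 m) T = 0 := by
        rw [hT, coeff_sum_xy]
        refine Finset.sum_eq_zero fun pr hpr => ?_
        have hprS := (hSmem pr).1 hpr
        rw [if_neg]
        rintro ⟨h1, h2⟩
        omega
      have hc2 : coeff (Finsupp.single 0 (n + k - 1 - m) + Finsupp.single 1 m) T
          = ccf n k h pfun qfun m := by
        rw [hTexp, coeff_sum_xy]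
        rw [Finset.sum_congr rfl (fun m' hm' => ?_),
          Finset.sum_ite_eq' (range (n + k)) m (fun m' => ccf n k h pfun qfun m'),
          if_pos (mem_range.2 hmnk)]
        simp only [mem_range] at hm'
        exact if_congr ⟨fun hc => hc.2, fun hc => ⟨by omega, hc⟩⟩ rfl rfl
      rw [hc2] at hc1
      exact hc1
    have hvvE : (Matrix.fromBlocks A B C' D).transpose.mulVec
        (Sum.elim (fun i : Fin k => pfun ↑i) (fun i : Fin k => qfun ↑i)) = 0 := by
      funext x
      cases x with
      | inl j =>
        rw [hmulinl pfun qfun j]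
        exact hccz ↑j (by have := j.isLt; omega) (Or.inl j.isLt)
      | inr j =>
        rw [hmulinr pfun qfun j]
        exact hccz (n + ↑j) (by have := j.isLt; omega) (Or.inr (by omega))
    have hvv0 : Sum.elim (fun i : Fin k => pfun ↑i) (fun i : Fin k => qfun ↑i) ≠ 0 := by
      intro h0
      have hz : ∀ i < k, pfun i = 0 ∧ qfun i = 0 := by
        intro i hi
        constructor
        · have := congrFun h0 (Sum.inl ⟨i, hi⟩)
          simpa using this
        · have := congrFun h0 (Sum.inr ⟨i, hi⟩)
          simpa using this
      have hcc0 : ∀ m : ℕ, ccf n k h pfun qfun m = 0 := by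
        intro m
        refine Finset.sum_eq_zero fun i hi => ?_
        simp only [mem_range] at hi
        split_ifs with hcond
        · rw [(hz i hi).1, (hz i hi).2]; ring
        · rfl
      have hT0 : T = 0 := by
        rw [hTexp]
        exact Finset.sum_eq_zero fun m hm => by rw [hcc0 m]; simp
      have hcp : coeff (Finsupp.single 0 p₀.1 + Finsupp.single 1 p₀.2) T = c p₀ := by
        rw [hT, coeff_sum_xy]
        rw [Finset.sum_congr rfl (fun pr hpr => ?_),
          Finset.sum_ite_eq' S p₀ (fun pr => c pr), if_pos hp₀S]
        exact if_congr ⟨fun hc => Prod.ext hc.1 hc.2,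
          fun hc => by rw [hc]; exact ⟨rfl, rfl⟩⟩ rfl rfl
      rw [hT0] at hcp
      simp only [coeff_zero] at hcp
      exact hc0 hcp.symm
    rw [← Matrix.det_transpose]
    exact Matrix.exists_mulVec_eq_zero_iff.1 ⟨_, hvv0, hvvE⟩
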